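/- For a right intensity matrix B, the limit P := lim_{t→∞} exp(t·B) exists (entrywise, as real t → ∞). -/

import Mathlib

open Matrix Filter
open scoped Nat
set_option linter.unusedSectionVars false
set_option maxHeartbeats 1000000

namespace ExpIntensityAux

open NormedSpace

variable {Z : Type*} [Fintype Z] [DecidableEq Z]

section Generic

variable {𝔸 : Type*} [NormedRing 𝔸] [NormedAlgebra ℝ 𝔸] [CompleteSpace 𝔸]

/-- `mulVec` at a fixed vector, as an additive monoid hom. -/
def mulVecHom (x : Z → 𝔸) : Matrix Z Z 𝔸 →+ (Z → 𝔸) where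
  toFun A := A *ᵥ x
  map_zero' := Matrix.zero_mulVec x
  map_add' A B := Matrix.add_mulVec A B x

lemma continuous_mulVecHom (x : Z → 𝔸) : Continuous (mulVecHom (Z := Z) x) := by
  refine continuous_pi fun i => ?_
  simp only [mulVecHom, AddMonoidHom.coe_mk, ZeroHom.coe_mk, Matrix.mulVec, dotProduct]
  exact continuous_finset_sum _ fun j _ =>
    (((continuous_apply j).comp (continuous_apply i) :
      Continuous fun a : Matrix Z Z 𝔸 => a i j).mul continuous_const)

lemma hasSum_exp_mulVec (M : Matrix Z Z 𝔸) (x : Z → 𝔸) :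
    HasSum (fun n : ℕ => (n !⁻¹ : ℝ) • (M ^ n *ᵥ x)) (exp M *ᵥ x) := by
  letI : SeminormedRing (Matrix Z Z 𝔸) := Matrix.linftyOpSemiNormedRing
  letI : NormedRing (Matrix Z Z 𝔸) := Matrix.linftyOpNormedRing
  letI : NormedAlgebra ℝ (Matrix Z Z 𝔸) := Matrix.linftyOpNormedAlgebra
  haveI : @CompleteSpace (Matrix Z Z 𝔸) (PseudoMetricSpace.toUniformSpace (α := Matrix Z Z 𝔸)) :=
    inferInstanceAs (CompleteSpace (Z → Z → 𝔸))
  have hsum : HasSum (fun n : ℕ => (n !⁻¹ : ℝ) • M ^ n) (exp M) := by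
    rw [exp_eq_tsum ℝ]
    exact (expSeries_summable' (𝕂 := ℝ) M).hasSum
  have := hsum.map (mulVecHom x) (continuous_mulVecHom x)
  simpa [Function.comp_def, mulVecHom, Matrix.smul_mulVec] using this

lemma exp_mulVec_eq_sum {M : Matrix Z Z 𝔸} {x : Z → 𝔸} {n : ℕ}
    (h : ∀ k, n ≤ k → M ^ k *ᵥ x = 0) :
    exp M *ᵥ x = ∑ k ∈ Finset.range n, (k !⁻¹ : ℝ) • (M ^ k *ᵥ x) := by
  have h1 := hasSum_exp_mulVec M x
  have h2 : HasSum (fun k : ℕ => (k !⁻¹ : ℝ) • (M ^ k *ᵥ x))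
      (∑ k ∈ Finset.range n, (k !⁻¹ : ℝ) • (M ^ k *ᵥ x)) := by
    refine hasSum_sum_of_ne_finset_zero fun k hk => ?_
    rw [h k (by simpa using hk)]
    simp
  exact h1.unique h2

lemma hasSum_exp_entry (M : Matrix Z Z ℝ) (i j : Z) :
    HasSum (fun n : ℕ => (n !⁻¹ : ℝ) • (M ^ n) i j) (exp M i j) := by
  letI : SeminormedRing (Matrix Z Z ℝ) := Matrix.linftyOpSemiNormedRing
  letI : NormedRing (Matrix Z Z ℝ) := Matrix.linftyOpNormedRing
  letI : NormedAlgebra ℝ (Matrix Z Z ℝ) := Matrix.linftyOpNormedAlgebra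
  have hsum : HasSum (fun n : ℕ => (n !⁻¹ : ℝ) • M ^ n) (exp M) := by
    rw [exp_eq_tsum ℝ]
    exact (expSeries_summable' (𝕂 := ℝ) M).hasSum
  have hc : Continuous (fun A : Matrix Z Z ℝ => A i j) :=
    (continuous_apply j).comp (continuous_apply i)
  have := hsum.map ((Pi.evalAddMonoidHom (fun _ : Z => ℝ) j).comp
    (Pi.evalAddMonoidHom (fun _ : Z => Z → ℝ) i)) hc
  exact this

end Generic

section Real

lemma pow_entry_nonneg {M : Matrix Z Z ℝ} (hM : ∀ i j, 0 ≤ M i j) :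
    ∀ (n : ℕ) (i j : Z), 0 ≤ (M ^ n) i j := by
  intro n
  induction n with
  | zero => intro i j; by_cases h : i = j <;> simp [Matrix.one_apply, h]
  | succ n ih =>
    intro i j
    rw [pow_succ, Matrix.mul_apply]
    exact Finset.sum_nonneg fun k _ => mul_nonneg (ih i k) (hM k j)

lemma exp_entry_nonneg {M : Matrix Z Z ℝ} (hM : ∀ i j, 0 ≤ M i j) (i j : Z) :
    0 ≤ exp M i j :=
  (hasSum_exp_entry M i j).nonneg fun n =>
    smul_nonneg (by positivity) (pow_entry_nonneg hM n i j)

lemma exp_smul_one_eq (r : ℝ) :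
    exp (r • (1 : Matrix Z Z ℝ)) = Real.exp r • (1 : Matrix Z Z ℝ) := by
  letI : SeminormedRing (Matrix Z Z ℝ) := Matrix.linftyOpSemiNormedRing
  letI : NormedRing (Matrix Z Z ℝ) := Matrix.linftyOpNormedRing
  letI : NormedAlgebra ℝ (Matrix Z Z ℝ) := Matrix.linftyOpNormedAlgebra
  have h : r • (1 : Matrix Z Z ℝ) = algebraMap ℝ (Matrix Z Z ℝ) r :=
    (Algebra.algebraMap_eq_smul_one r).symm
  rw [h]
  refine Eq.trans (map_exp (algebraMap ℝ (Matrix Z Z ℝ)) (continuous_algebraMap _ _) r).symm ?_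
  rw [← Real.exp_eq_exp_ℝ, Algebra.algebraMap_eq_smul_one]

variable (B : Matrix Z Z ℝ)

lemma diag_nonpos (hoff : ∀ i j, i ≠ j → 0 ≤ B i j) (hrow : ∀ i, ∑ j, B i j = 0)
    (k : Z) : B k k ≤ 0 := by
  have h1 := hrow k
  rw [← Finset.add_sum_erase _ _ (Finset.mem_univ k)] at h1
  have h2 : 0 ≤ ∑ j ∈ Finset.univ.erase k, B k j :=
    Finset.sum_nonneg fun j hj => hoff k j (Ne.symm (Finset.mem_erase.mp hj).1)
  linarith

lemma entries_exp_nonneg (hoff : ∀ i j, i ≠ j → 0 ≤ B i j) (hrow : ∀ i, ∑ j, B i j = 0)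
    {t : ℝ} (ht : 0 ≤ t) (i j : Z) : 0 ≤ exp (t • B) i j := by
  classical
  set c : ℝ := ∑ k, (-B k k) with hc
  have hck : ∀ k, -B k k ≤ c := fun k =>
    Finset.single_le_sum (f := fun k => -B k k)
      (fun k _ => by simpa using neg_nonneg.mpr (diag_nonpos B hoff hrow k))
      (Finset.mem_univ k)
  have hA : ∀ i j, 0 ≤ (t • (B + c • (1 : Matrix Z Z ℝ))) i j := by
    intro i j
    by_cases h : i = j
    · subst h
      have : 0 ≤ B i i + c := by linarith [hck i]
      simpa [Matrix.smul_apply, Matrix.add_apply, Matrix.one_apply] using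
        mul_nonneg ht this
    · have := hoff i j h
      simpa [Matrix.smul_apply, Matrix.add_apply, Matrix.one_apply, h] using
        mul_nonneg ht this
  have hsplit : t • B =
      (-(t * c)) • (1 : Matrix Z Z ℝ) + t • (B + c • (1 : Matrix Z Z ℝ)) := by
    module
  have hcomm : Commute ((-(t * c)) • (1 : Matrix Z Z ℝ))
      (t • (B + c • (1 : Matrix Z Z ℝ))) :=
    ((Commute.one_left _).smul_left _).smul_right _
  rw [hsplit, Matrix.exp_add_of_commute _ _ hcomm, exp_smul_one_eq]
  have h1 : ((Real.exp (-(t * c)) • (1 : Matrix Z Z ℝ)) *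
      exp (t • (B + c • (1 : Matrix Z Z ℝ)))) i j =
      Real.exp (-(t * c)) * exp (t • (B + c • (1 : Matrix Z Z ℝ))) i j := by
    rw [smul_mul_assoc, one_mul, Matrix.smul_apply, smul_eq_mul]
  rw [h1]
  exact mul_nonneg (Real.exp_nonneg _) (exp_entry_nonneg hA i j)

lemma exp_mulVec_ones (hrow : ∀ i, ∑ j, B i j = 0) (t : ℝ) :
    exp (t • B) *ᵥ (fun _ => (1 : ℝ)) = fun _ => 1 := by
  have hone : (t • B) *ᵥ (fun _ => (1 : ℝ)) = 0 := by
    funext i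
    simp [Matrix.mulVec, dotProduct, Matrix.smul_apply, ← Finset.mul_sum, hrow i]
  have h : ∀ k, 1 ≤ k → (t • B) ^ k *ᵥ (fun _ => (1 : ℝ)) = 0 := by
    intro k hk
    obtain ⟨m, rfl⟩ := Nat.exists_eq_add_of_le' hk
    rw [pow_succ, ← Matrix.mulVec_mulVec, hone, Matrix.mulVec_zero]
  rw [exp_mulVec_eq_sum h]
  funext i
  simp [Matrix.one_mulVec]

lemma exp_row_sum (hrow : ∀ i, ∑ j, B i j = 0) (t : ℝ) (i : Z) :
    ∑ j, exp (t • B) i j = 1 := by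
  have h := congrFun (exp_mulVec_ones B hrow t) i
  simpa [Matrix.mulVec, dotProduct] using h

lemma entries_exp_le_one (hoff : ∀ i j, i ≠ j → 0 ≤ B i j) (hrow : ∀ i, ∑ j, B i j = 0)
    {t : ℝ} (ht : 0 ≤ t) (i j : Z) : exp (t • B) i j ≤ 1 := by
  have h1 := exp_row_sum B hrow t i
  have h2 := Finset.single_le_sum (f := fun j => exp (t • B) i j)
    (fun j _ => entries_exp_nonneg B hoff hrow ht i j) (Finset.mem_univ j)
  linarith

end Real

section ComplexSide

lemma exp_map_ofReal (M : Matrix Z Z ℝ) :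
    exp (M.map (Complex.ofReal ·)) = (exp M).map (Complex.ofReal ·) := by
  letI : SeminormedRing (Matrix Z Z ℝ) := Matrix.linftyOpSemiNormedRing
  letI : NormedRing (Matrix Z Z ℝ) := Matrix.linftyOpNormedRing
  letI : NormedAlgebra ℝ (Matrix Z Z ℝ) := Matrix.linftyOpNormedAlgebra
  letI : NormedAlgebra ℚ (Matrix Z Z ℝ) := Matrix.linftyOpNormedAlgebra
  letI : SeminormedRing (Matrix Z Z ℂ) := Matrix.linftyOpSemiNormedRing
  letI : NormedRing (Matrix Z Z ℂ) := Matrix.linftyOpNormedRing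
  letI : NormedAlgebra ℝ (Matrix Z Z ℂ) := Matrix.linftyOpNormedAlgebra
  have hφ : Continuous (Complex.ofRealHom.mapMatrix : Matrix Z Z ℝ →+* Matrix Z Z ℂ) := by
    show Continuous fun A : Matrix Z Z ℝ => A.map (Complex.ofRealHom ·)
    exact continuous_pi fun i => continuous_pi fun j =>
      Complex.continuous_ofReal.comp ((continuous_apply j).comp (continuous_apply i))
  exact
    (map_exp (Complex.ofRealHom.mapMatrix : Matrix Z Z ℝ →+* Matrix Z Z ℂ) hφ M).symm

lemma map_ofReal_smul (t : ℝ) (M : Matrix Z Z ℝ) :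
    (t • M).map (Complex.ofReal ·) = t • M.map (Complex.ofReal ·) := by
  ext i j
  simp [Matrix.map_apply, Matrix.smul_apply, Complex.ofReal_mul, Complex.real_smul]

variable (B : Matrix Z Z ℝ)

lemma exp_mulVec_norm_le (hoff : ∀ i j, i ≠ j → 0 ≤ B i j) (hrow : ∀ i, ∑ j, B i j = 0)
    (x : Z → ℂ) {t : ℝ} (ht : 0 ≤ t) (i : Z) :
    ‖(exp (t • B.map (Complex.ofReal ·)) *ᵥ x) i‖ ≤ ∑ j, ‖x j‖ := by
  have hmap : exp (t • B.map (Complex.ofReal ·)) = (exp (t • B)).map (Complex.ofReal ·) := by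
    rw [← map_ofReal_smul, exp_map_ofReal]
  rw [hmap]
  have hval : ((exp (t • B)).map (Complex.ofReal ·) *ᵥ x) i =
      ∑ j, (exp (t • B) i j : ℂ) * x j := by
    simp [Matrix.mulVec, dotProduct, Matrix.map_apply]
  rw [hval]
  refine (norm_sum_le _ _).trans (Finset.sum_le_sum fun j _ => ?_)
  rw [norm_mul, Complex.norm_real]
  have h0 := entries_exp_nonneg B hoff hrow ht i j
  have h1 := entries_exp_le_one B hoff hrow ht i j
  calc ‖exp (t • B) i j‖ * ‖x j‖ = exp (t • B) i j * ‖x j‖ := by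
        rw [Real.norm_of_nonneg h0]
    _ ≤ 1 * ‖x j‖ := by gcongr
    _ = ‖x j‖ := one_mul _

end ComplexSide

/-- The complexification of a real matrix. -/
def cm (B : Matrix Z Z ℝ) : Matrix Z Z ℂ := B.map (Complex.ofReal ·)

section Kernel

variable (B : Matrix Z Z ℝ)

lemma mulVec_eq_zero_of_sq (hoff : ∀ i j, i ≠ j → 0 ≤ B i j)
    (hrow : ∀ i, ∑ j, B i j = 0) {x : Z → ℂ}
    (h2 : (cm B) ^ 2 *ᵥ x = 0) : (cm B) *ᵥ x = 0 := by
  by_contra hne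
  obtain ⟨i, hi⟩ : ∃ i, (cm B *ᵥ x) i ≠ 0 := by
    by_contra h; push_neg at h; exact hne (funext h)
  have hform : ∀ t : ℝ, exp (t • cm B) *ᵥ x = x + t • (cm B *ᵥ x) := by
    intro t
    have h : ∀ k, 2 ≤ k → (t • cm B) ^ k *ᵥ x = 0 := by
      intro k hk
      obtain ⟨m, rfl⟩ := Nat.exists_eq_add_of_le' hk
      have hz : (cm B) ^ (m + 2) *ᵥ x = 0 := by
        rw [pow_add, ← Matrix.mulVec_mulVec, h2, Matrix.mulVec_zero]
      rw [smul_pow, Matrix.smul_mulVec, hz, smul_zero]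
    rw [exp_mulVec_eq_sum h, Finset.sum_range_succ, Finset.sum_range_one]
    simp [Matrix.smul_mulVec, Matrix.one_mulVec]
  have hbound : ∀ t : ℝ, 0 ≤ t → ‖x i + t • (cm B *ᵥ x) i‖ ≤ ∑ j, ‖x j‖ := by
    intro t ht
    have h1 := exp_mulVec_norm_le B hoff hrow x ht i
    have h2' : (exp (t • B.map (Complex.ofReal ·)) *ᵥ x) i
        = x i + t • (cm B *ᵥ x) i := by
      have := congrFun (hform t) i
      simpa [cm] using this
    rw [h2'] at h1
    exact h1
  have hKi : ∀ t : ℝ, 0 ≤ t → t * ‖(cm B *ᵥ x) i‖ ≤ (∑ j, ‖x j‖) + ‖x i‖ := by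
    intro t ht
    have h1 : ‖t • (cm B *ᵥ x) i‖ ≤ ‖x i + t • (cm B *ᵥ x) i‖ + ‖x i‖ := by
      have h := norm_sub_le (x i + t • (cm B *ᵥ x) i) (x i)
      simpa using h
    rw [norm_smul, Real.norm_of_nonneg ht] at h1
    have h2' := hbound t ht
    linarith
  have hvpos : 0 < ‖(cm B *ᵥ x) i‖ := norm_pos_iff.mpr hi
  have hK0 : 0 ≤ ∑ j, ‖x j‖ := Finset.sum_nonneg fun j _ => norm_nonneg _
  have ht0 : 0 ≤ ((∑ j, ‖x j‖) + ‖x i‖ + 1) / ‖(cm B *ᵥ x) i‖ := by positivity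
  have hfin := hKi _ ht0
  rw [div_mul_cancel₀ _ (ne_of_gt hvpos)] at hfin
  linarith [norm_nonneg (x i)]

lemma mulVec_eq_zero_of_pow (hoff : ∀ i j, i ≠ j → 0 ≤ B i j)
    (hrow : ∀ i, ∑ j, B i j = 0) :
    ∀ (k : ℕ) {x : Z → ℂ}, (cm B) ^ k *ᵥ x = 0 → (cm B) *ᵥ x = 0 := by
  intro k
  induction k with
  | zero =>
    intro x hx
    rw [pow_zero, Matrix.one_mulVec] at hx
    rw [hx, Matrix.mulVec_zero]
  | succ k ih =>
    intro x hx
    rcases k with _ | m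
    · rwa [pow_one] at hx
    · have h2 : (cm B) ^ 2 *ᵥ ((cm B) ^ m *ᵥ x) = 0 := by
        rw [Matrix.mulVec_mulVec, ← pow_add]
        have he : 2 + m = m + 1 + 1 := by omega
        rw [he]; exact hx
      have h1 := mulVec_eq_zero_of_sq B hoff hrow h2
      have h3 : (cm B) ^ (m + 1) *ᵥ x = 0 := by
        rw [pow_succ', ← Matrix.mulVec_mulVec]; exact h1
      exact ih h3

lemma exists_eigenvec {M : Matrix Z Z ℂ} :
    ∀ (k : ℕ) {x : Z → ℂ}, x ≠ 0 → M ^ k *ᵥ x = 0 →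
      ∃ y : Z → ℂ, y ≠ 0 ∧ M *ᵥ y = 0 := by
  intro k
  induction k with
  | zero =>
    intro x hx h
    rw [pow_zero, Matrix.one_mulVec] at h
    exact absurd h hx
  | succ k ih =>
    intro x hx h
    by_cases hz : M *ᵥ x = 0
    · exact ⟨x, hx, hz⟩
    · refine ih hz ?_
      rw [Matrix.mulVec_mulVec, ← pow_succ]
      exact h

lemma eig_cases (hoff : ∀ i j, i ≠ j → 0 ≤ B i j) (hrow : ∀ i, ∑ j, B i j = 0)
    {μ : ℂ} {y : Z → ℂ} (hy : y ≠ 0)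
    (heig : (cm B) *ᵥ y = μ • y) : μ = 0 ∨ μ.re < 0 := by
  obtain ⟨j₀, hj₀⟩ : ∃ j, y j ≠ 0 := by
    by_contra h; push_neg at h; exact hy (funext h)
  obtain ⟨i, -, hmax⟩ := Finset.exists_max_image Finset.univ (fun j => ‖y j‖)
    ⟨j₀, Finset.mem_univ j₀⟩
  have hyi : y i ≠ 0 := by
    intro h0
    have h := hmax j₀ (Finset.mem_univ j₀)
    rw [h0] at h
    simp only [norm_zero] at h
    exact hj₀ (norm_le_zero_iff.mp h)
  have hrowi : ∑ j, (B i j : ℂ) * y j = μ * y i := by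
    have h := congrFun heig i
    simpa [cm, Matrix.mulVec, dotProduct, Matrix.map_apply, Pi.smul_apply,
      smul_eq_mul] using h
  have hsplit : (μ - (B i i : ℂ)) * y i = ∑ j ∈ Finset.univ.erase i, (B i j : ℂ) * y j := by
    have h1 : (B i i : ℂ) * y i + ∑ j ∈ Finset.univ.erase i, (B i j : ℂ) * y j
        = ∑ j, (B i j : ℂ) * y j :=
      Finset.add_sum_erase Finset.univ (fun j => (B i j : ℂ) * y j) (Finset.mem_univ i)
    rw [hrowi] at h1
    linear_combination -h1
  have hnorm : ‖μ - (B i i : ℂ)‖ * ‖y i‖ ≤ (-(B i i)) * ‖y i‖ := by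
    calc ‖μ - (B i i : ℂ)‖ * ‖y i‖ = ‖(μ - (B i i : ℂ)) * y i‖ := (norm_mul _ _).symm
      _ ≤ ∑ j ∈ Finset.univ.erase i, ‖(B i j : ℂ) * y j‖ := by
          rw [hsplit]; exact norm_sum_le _ _
      _ ≤ ∑ j ∈ Finset.univ.erase i, B i j * ‖y i‖ := by
          refine Finset.sum_le_sum fun j hj => ?_
          have hne := (Finset.mem_erase.mp hj).1
          have hBij := hoff i j (Ne.symm hne)
          rw [norm_mul, Complex.norm_real, Real.norm_of_nonneg hBij]
          exact mul_le_mul_of_nonneg_left (hmax j (Finset.mem_univ j)) hBij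
      _ = (∑ j ∈ Finset.univ.erase i, B i j) * ‖y i‖ := (Finset.sum_mul _ _ _).symm
      _ = (-(B i i)) * ‖y i‖ := by
          have h := hrow i
          rw [← Finset.add_sum_erase _ _ (Finset.mem_univ i)] at h
          have h2 : ∑ j ∈ Finset.univ.erase i, B i j = -(B i i) := by linarith
          rw [h2]
  have hpos : 0 < ‖y i‖ := norm_pos_iff.mpr hyi
  have hkey : ‖μ - (B i i : ℂ)‖ ≤ -(B i i) :=
    le_of_mul_le_mul_right hnorm hpos
  have hd : B i i ≤ 0 := diag_nonpos B hoff hrow i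
  have hsq : (μ.re - B i i) ^ 2 + μ.im ^ 2 ≤ (B i i) ^ 2 := by
    have h1 : ‖μ - ((B i i : ℝ) : ℂ)‖ ^ 2 ≤ (-(B i i)) ^ 2 :=
      pow_le_pow_left₀ (norm_nonneg _) hkey 2
    rw [Complex.sq_norm, Complex.normSq_apply] at h1
    simp only [Complex.sub_re, Complex.ofReal_re, Complex.sub_im, Complex.ofReal_im,
      sub_zero] at h1
    nlinarith [h1]
  rcases lt_or_ge μ.re 0 with h | h
  · exact Or.inr h
  · left
    have hmn : 0 ≤ (-(B i i)) * μ.re := mul_nonneg (neg_nonneg.mpr hd) h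
    have hre : μ.re = 0 := by nlinarith [sq_nonneg μ.re, sq_nonneg μ.im]
    have him : μ.im = 0 := by nlinarith [sq_nonneg μ.im, sq_nonneg μ.re]
    exact Complex.ext (by simpa using hre) (by simpa using him)

end Kernel

section Decay

lemma tendsto_coeff_zero {μ : ℂ} (hμ : μ.re < 0) (k : ℕ) :
    Tendsto (fun t : ℝ => Complex.exp ((t : ℂ) * μ) * (t : ℂ) ^ k) atTop (nhds 0) := by
  have ha0 : 0 < -μ.re := by linarith
  have hg : Tendsto (fun t : ℝ =>
      ((-μ.re) ^ k)⁻¹ * (((-μ.re) * t) ^ k * Real.exp (-((-μ.re) * t))))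
      atTop (nhds 0) := by
    have h1 : Tendsto (fun t : ℝ => (-μ.re) * t) atTop atTop :=
      Tendsto.const_mul_atTop ha0 tendsto_id
    have h2 := (Real.tendsto_pow_mul_exp_neg_atTop_nhds_zero k).comp h1
    have h3 := h2.const_mul (((-μ.re) ^ k)⁻¹)
    simpa [Function.comp_def] using h3
  refine squeeze_zero_norm' ?_ hg
  filter_upwards [eventually_ge_atTop (0 : ℝ)] with t ht
  have h1 : ‖Complex.exp ((t : ℂ) * μ) * (t : ℂ) ^ k‖ = Real.exp (t * μ.re) * t ^ k := by
    rw [norm_mul, norm_pow, Complex.norm_exp,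
      Complex.norm_real, Real.norm_of_nonneg ht]
    congr 2
    simp [Complex.mul_re]
  have h2 : ((-μ.re) ^ k)⁻¹ * (((-μ.re) * t) ^ k * Real.exp (-((-μ.re) * t)))
      = Real.exp (t * μ.re) * t ^ k := by
    rw [mul_pow]
    have he : -((-μ.re) * t) = t * μ.re := by ring
    rw [he]
    have hne : ((-μ.re) ^ k) ≠ 0 := by positivity
    field_simp
  rw [h1, h2]

lemma exp_smul_one_complex (c : ℂ) :
    exp (c • (1 : Matrix Z Z ℂ)) = Complex.exp c • (1 : Matrix Z Z ℂ) := by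
  letI : SeminormedRing (Matrix Z Z ℂ) := Matrix.linftyOpSemiNormedRing
  letI : NormedRing (Matrix Z Z ℂ) := Matrix.linftyOpNormedRing
  letI : NormedAlgebra ℂ (Matrix Z Z ℂ) := Matrix.linftyOpNormedAlgebra
  have h : c • (1 : Matrix Z Z ℂ) = algebraMap ℂ (Matrix Z Z ℂ) c :=
    (Algebra.algebraMap_eq_smul_one c).symm
  rw [h]
  refine Eq.trans (map_exp (algebraMap ℂ (Matrix Z Z ℂ)) (continuous_algebraMap _ _) c).symm ?_
  rw [Algebra.algebraMap_eq_smul_one]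
  congr 1
  rw [← Complex.exp_eq_exp_ℂ]

lemma tendsto_exp_mulVec_of_re_neg (B : Matrix Z Z ℝ) {μ : ℂ} (hμ : μ.re < 0)
    {x : Z → ℂ} {n : ℕ}
    (hx : ((cm B) - μ • 1) ^ n *ᵥ x = 0) :
    Tendsto (fun t : ℝ => exp (t • cm B) *ᵥ x) atTop (nhds 0) := by
  set N : Matrix Z Z ℂ := (cm B) - μ • 1 with hN
  have hBc : ∀ t : ℝ, t • cm B = ((t : ℂ) * μ) • (1 : Matrix Z Z ℂ) + t • N := by
    intro t
    rw [hN, smul_sub]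
    have h1 : ((t : ℂ) * μ) • (1 : Matrix Z Z ℂ) = t • (μ • (1 : Matrix Z Z ℂ)) := by
      rw [← smul_assoc, Complex.real_smul]
    rw [h1]
    abel
  have hsplit : ∀ t : ℝ,
      exp (t • cm B) = Complex.exp ((t : ℂ) * μ) • exp (t • N) := by
    intro t
    rw [hBc t, Matrix.exp_add_of_commute _ _
      (((Commute.one_left _).smul_left _).smul_right _), exp_smul_one_complex,
      smul_mul_assoc, one_mul]
  have hNk : ∀ (t : ℝ) (k : ℕ), n ≤ k → (t • N) ^ k *ᵥ x = 0 := by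
    intro t k hk
    obtain ⟨m, rfl⟩ := Nat.exists_eq_add_of_le hk
    have hz : N ^ (n + m) *ᵥ x = 0 := by
      rw [add_comm, pow_add, ← Matrix.mulVec_mulVec, hx, Matrix.mulVec_zero]
    rw [smul_pow, Matrix.smul_mulVec, hz, smul_zero]
  have hform : ∀ t : ℝ, exp (t • cm B) *ᵥ x =
      ∑ k ∈ Finset.range n, (Complex.exp ((t : ℂ) * μ) * (t : ℂ) ^ k) •
        ((k !⁻¹ : ℝ) • (N ^ k *ᵥ x)) := by
    intro t
    rw [hsplit t, Matrix.smul_mulVec, exp_mulVec_eq_sum (hNk t), Finset.smul_sum]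
    refine Finset.sum_congr rfl fun k _ => ?_
    rw [smul_pow, Matrix.smul_mulVec]
    rw [smul_comm ((k !) : ℝ)⁻¹]
    rw [← smul_smul (Complex.exp ((t : ℂ) * μ))]
    congr 1
    rw [← Complex.ofReal_pow, Complex.coe_smul]
  have htend : Tendsto (fun t : ℝ =>
      ∑ k ∈ Finset.range n, (Complex.exp ((t : ℂ) * μ) * (t : ℂ) ^ k) •
        ((k !⁻¹ : ℝ) • (N ^ k *ᵥ x))) atTop (nhds 0) := by
    have h0 : (0 : Z → ℂ) = ∑ k ∈ Finset.range n, (0 : Z → ℂ) := by simp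
    rw [h0]
    refine tendsto_finset_sum _ fun k _ => ?_
    have h1 := (tendsto_coeff_zero hμ k).smul_const ((k !⁻¹ : ℝ) • (N ^ k *ᵥ x))
    simpa using h1
  exact (funext hform : _) ▸ htend

end Decay

lemma exp_mulVec_of_ker (M : Matrix Z Z ℂ) {x : Z → ℂ} (h : M *ᵥ x = 0) (t : ℝ) :
    exp (t • M) *ᵥ x = x := by
  have hk : ∀ k, 1 ≤ k → (t • M) ^ k *ᵥ x = 0 := by
    intro k hk
    obtain ⟨m, rfl⟩ := Nat.exists_eq_add_of_le' hk
    have hz : M ^ (m + 1) *ᵥ x = 0 := by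
      rw [pow_succ, ← Matrix.mulVec_mulVec, h, Matrix.mulVec_zero]
    rw [smul_pow, Matrix.smul_mulVec, hz, smul_zero]
  rw [exp_mulVec_eq_sum hk]
  simp [Matrix.one_mulVec]

end ExpIntensityAux

open ExpIntensityAux

/-- For a right intensity matrix `B`, the limit of `exp (t • B)` as real
`t → ∞` exists. -/
theorem exp_intensity_tendsto {Z : Type*} [Fintype Z] [DecidableEq Z]
    (B : Matrix Z Z ℝ)
    (hoff : ∀ i j, i ≠ j → 0 ≤ B i j)
    (hrow : ∀ i, ∑ j, B i j = 0) :
    ∃ P : Matrix Z Z ℝ,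
      Tendsto (fun t : ℝ => NormedSpace.exp (t • B)) atTop (nhds P) := by
  classical
  have key : ∀ x : Z → ℂ, ∃ L : Z → ℂ,
      Tendsto (fun t : ℝ => NormedSpace.exp (t • cm B) *ᵥ x) atTop (nhds L) := by
    intro x
    let S : Submodule ℂ (Z → ℂ) :=
      { carrier := {x | ∃ L, Tendsto (fun t : ℝ => NormedSpace.exp (t • cm B) *ᵥ x)
          atTop (nhds L)}
        add_mem' := by
          rintro a b ⟨La, hLa⟩ ⟨Lb, hLb⟩
          exact ⟨La + Lb, by simpa [Matrix.mulVec_add] using hLa.add hLb⟩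
        zero_mem' := ⟨0, by simpa [Matrix.mulVec_zero] using
          (tendsto_const_nhds : Tendsto (fun _ : ℝ => (0 : Z → ℂ)) atTop (nhds 0))⟩
        smul_mem' := by
          rintro c a ⟨La, hLa⟩
          exact ⟨c • La, by simpa [Matrix.mulVec_smul] using hLa.const_smul c⟩ }
    have htop : (⊤ : Submodule ℂ (Z → ℂ)) ≤ S := by
      rw [← Module.End.iSup_maxGenEigenspace_eq_top
        (Matrix.toLinAlgEquiv' (cm B) : Module.End ℂ (Z → ℂ))]
      refine iSup_le fun μ => ?_
      intro v hv
      obtain ⟨k, hk⟩ := (Module.End.mem_maxGenEigenspace _ μ v).mp hv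
      have hk' : ((cm B - μ • 1) ^ k) *ᵥ v = 0 := by
        have he : Matrix.toLinAlgEquiv' ((cm B - μ • 1) ^ k)
            = ((Matrix.toLinAlgEquiv' (cm B) : Module.End ℂ (Z → ℂ)) - μ • 1) ^ k := by
          rw [map_pow, map_sub, _root_.map_smul, _root_.map_one]
        rw [← Matrix.toLinAlgEquiv'_apply, he]
        exact hk
      by_cases hv0 : v = 0
      · rw [hv0]; exact S.zero_mem
      by_cases hμ : μ = 0
      · have hk'' : (cm B) ^ k *ᵥ v = 0 := by
          simpa [hμ] using hk'
        have hker := mulVec_eq_zero_of_pow B hoff hrow k hk''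
        refine ⟨v, ?_⟩
        have hfun : (fun t : ℝ => NormedSpace.exp (t • cm B) *ᵥ v) = fun _ => v := by
          funext t; exact exp_mulVec_of_ker (cm B) hker t
        rw [hfun]
        exact tendsto_const_nhds
      · obtain ⟨y, hy0, hy⟩ := exists_eigenvec k hv0 hk'
        have heig : (cm B) *ᵥ y = μ • y := by
          have h1 : (cm B) *ᵥ y - (μ • (1 : Matrix Z Z ℂ)) *ᵥ y = 0 := by
            rw [← Matrix.sub_mulVec]; exact hy
          have h2 : (μ • (1 : Matrix Z Z ℂ)) *ᵥ y = μ • y := by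
            rw [Matrix.smul_mulVec, Matrix.one_mulVec]
          rw [h2] at h1
          linear_combination (norm := module) h1
        rcases eig_cases B hoff hrow hy0 heig with h | h
        · exact absurd h hμ
        · exact ⟨0, tendsto_exp_mulVec_of_re_neg B h hk'⟩
    exact htop (by trivial)
  choose L hL using key
  refine ⟨fun i j => (L (Pi.single j 1) i).re, ?_⟩
  refine tendsto_pi_nhds.mpr fun i => ?_
  rw [tendsto_pi_nhds]
  intro j
  have h2 : Tendsto (fun t : ℝ => (NormedSpace.exp (t • cm B) *ᵥ Pi.single j 1) i)
      atTop (nhds (L (Pi.single j 1) i)) := tendsto_pi_nhds.mp (hL (Pi.single j 1)) i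
  have h3 := (Complex.continuous_re.tendsto _).comp h2
  have h4 : Tendsto (fun t : ℝ => ((NormedSpace.exp (t • cm B) *ᵥ Pi.single j 1) i).re)
      atTop (nhds (L (Pi.single j 1) i).re) := by
    simpa [Function.comp_def] using h3
  refine h4.congr fun t => ?_
  have hmap : NormedSpace.exp (t • cm B)
      = (NormedSpace.exp (t • B)).map (Complex.ofReal ·) := by
    rw [cm, ← map_ofReal_smul, exp_map_ofReal]
  rw [hmap, Matrix.mulVec_single_one]
  simp [Matrix.transpose_apply, Matrix.map_apply]
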